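/- Let Ω = (-1,1)² ⊂ ℝ² and S' = {(x₁,x₂) ∈ Ω : x₁ = 1/(2n) for some n ∈ ℕ, n ≥ 1}. Then S' does not satisfy the outward ball property: taking T = (-1,0] × (-1,1) ⊂ Ω, every open ball B_R(x₀) ⊂ Ω \ (T ∪ S') with ∂B_R(x₀) ∩ T ≠ ∅ fails to exist. -/

import Mathlib

open Metric Set

/-- The outward ball property. -/
def OutwardBallProperty {n : ℕ} (Ω S : Set (EuclideanSpace ℝ (Fin n))) : Prop :=
  ∀ T : Set (EuclideanSpace ℝ (Fin n)), T.Nonempty → T ⊆ Ω → T ≠ Ω →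
    (∃ C : Set (EuclideanSpace ℝ (Fin n)), IsClosed C ∧ T = C ∩ Ω) →
    ∃ R : ℝ, 0 < R ∧ ∃ x₀ ∈ Ω \ (T ∪ S),
      Metric.ball x₀ R ⊆ Ω \ (T ∪ S) ∧ (Metric.sphere x₀ R ∩ T).Nonempty

/-- The open square `(-1,1)²`. -/
def OmegaSq : Set (EuclideanSpace ℝ (Fin 2)) :=
  {x | x 0 ∈ Set.Ioo (-1 : ℝ) 1 ∧ x 1 ∈ Set.Ioo (-1 : ℝ) 1}

/-- The countable family of vertical lines `x₁ = 1/(2n)`, `n ≥ 1`, inside the square. -/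
def LinesSet : Set (EuclideanSpace ℝ (Fin 2)) :=
  {x | x ∈ OmegaSq ∧ ∃ m : ℕ, 1 ≤ m ∧ x 0 = 1 / (2 * (m : ℝ))}

/-- The relatively closed set `T = (-1,0] × (-1,1)`. -/
def TSet : Set (EuclideanSpace ℝ (Fin 2)) :=
  {x | x ∈ OmegaSq ∧ x 0 ≤ 0}

lemma key : ¬ ∃ R : ℝ, 0 < R ∧ ∃ x₀ : EuclideanSpace ℝ (Fin 2),
    Metric.ball x₀ R ⊆ OmegaSq \ (TSet ∪ LinesSet) ∧
    (Metric.sphere x₀ R ∩ TSet).Nonempty := by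
  rintro ⟨R, hR, x₀, hball, y, hy_s, hyΩ, hy0⟩
  set a := x₀ 0 with ha_def
  set b := x₀ 1 with hb_def
  have hpos : ∀ z ∈ Metric.ball x₀ R, 0 < z 0 := by
    intro z hz
    obtain ⟨hzΩ, hznot⟩ := hball hz
    by_contra h
    exact hznot (Or.inl ⟨hzΩ, le_of_not_gt h⟩)
  have ha : 0 < a := hpos x₀ (Metric.mem_ball_self hR)
  -- construct points on the horizontal line through x₀
  have hpmem : ∀ c : ℝ, |c - a| < R →
      ∃ p : EuclideanSpace ℝ (Fin 2), p ∈ Metric.ball x₀ R ∧ p 0 = c ∧ p 1 = b := by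
    intro c hc
    refine ⟨(WithLp.toLp 2 (fun i : Fin 2 => if i = 0 then c else b) : EuclideanSpace ℝ (Fin 2)), ?_, rfl, rfl⟩
    rw [Metric.mem_ball, EuclideanSpace.dist_eq, Fin.sum_univ_two]
    have e0 : dist (if (0:Fin 2) = 0 then c else b) (x₀ 0) = |c - a| := by
      rw [if_pos rfl, Real.dist_eq]
    have e1 : dist (if (1:Fin 2) = 0 then c else b) (x₀ 1) = 0 := by
      rw [if_neg (by decide), Real.dist_eq, sub_self, abs_zero]
    rw [e0, e1]
    rw [show (0:ℝ)^2 = 0 by norm_num, add_zero, sq_abs, Real.sqrt_sq_eq_abs]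
    exact hc
  -- a ≥ R
  have haR : R ≤ a := by
    by_contra h
    push_neg at h
    obtain ⟨p, hp, hp0, -⟩ := hpmem 0 (by rw [abs_sub_comm]; rwa [sub_zero, abs_of_pos ha])
    have := hpos p hp
    rw [hp0] at this
    exact lt_irrefl 0 this
  -- a ≤ R from the sphere point y in T
  have hdisty : dist y x₀ = R := Metric.mem_sphere.mp hy_s
  have hsum : (y 0 - a) ^ 2 + (y 1 - b) ^ 2 = R ^ 2 := by
    have h1 : Real.sqrt ((y 0 - a) ^ 2 + (y 1 - b) ^ 2) = R := by
      rw [← hdisty, EuclideanSpace.dist_eq, Fin.sum_univ_two, Real.dist_eq, Real.dist_eq,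
        sq_abs, sq_abs]
    have h2 := congrArg (· ^ 2) h1
    simp only at h2
    rwa [Real.sq_sqrt (by positivity)] at h2
  have haR' : a ≤ R := by nlinarith [sq_nonneg (y 1 - b), hy0]
  have haeq : a = R := le_antisymm haR' haR
  -- pick the line x₁ = 1/(2m) inside the ball
  set m : ℕ := max 1 ⌈1 / (2 * R)⌉₊ with hm_def
  have hm1 : 1 ≤ m := le_max_left _ _
  have hmR : (1 : ℝ) / (2 * R) ≤ m := le_trans (Nat.le_ceil _) (by exact_mod_cast le_max_right 1 ⌈1 / (2 * R)⌉₊)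
  have hmpos : (0 : ℝ) < m := by positivity
  set c : ℝ := 1 / (2 * (m : ℝ)) with hc_def
  have hc_pos : 0 < c := by positivity
  have hcR : c ≤ R := by
    rw [hc_def, div_le_iff₀ (by positivity)]
    have := (div_le_iff₀ (by positivity : (0:ℝ) < 2 * R)).mp hmR
    nlinarith
  obtain ⟨p, hp, hp0, -⟩ := hpmem c (by rw [haeq, abs_sub_comm, abs_of_nonneg (by linarith)]; linarith)
  obtain ⟨hpΩ, hpnot⟩ := hball hp
  exact hpnot (Or.inr ⟨hpΩ, m, hm1, hp0⟩)

theorem stmt2 :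
    (¬ OutwardBallProperty OmegaSq LinesSet) ∧
    ¬ ∃ R : ℝ, 0 < R ∧ ∃ x₀ : EuclideanSpace ℝ (Fin 2),
        Metric.ball x₀ R ⊆ OmegaSq \ (TSet ∪ LinesSet) ∧
        (Metric.sphere x₀ R ∩ TSet).Nonempty := by
  refine ⟨?_, key⟩
  intro H
  have hne : TSet.Nonempty := by
    refine ⟨(0 : EuclideanSpace ℝ (Fin 2)), ⟨⟨?_, ?_⟩, ?_⟩⟩ <;> norm_num
  have hsub : TSet ⊆ OmegaSq := fun x hx => hx.1
  have hneq : TSet ≠ OmegaSq := by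
    intro h
    have hq : (WithLp.toLp 2 (fun i : Fin 2 => if i = 0 then (1/2 : ℝ) else 0) : EuclideanSpace ℝ (Fin 2)) ∈ OmegaSq := by
      constructor <;> norm_num
    rw [← h] at hq
    have := hq.2
    norm_num at this
  have hclosed : ∃ C : Set (EuclideanSpace ℝ (Fin 2)), IsClosed C ∧ TSet = C ∩ OmegaSq := by
    refine ⟨{x | x 0 ≤ 0}, ?_, ?_⟩
    · exact isClosed_le (EuclideanSpace.proj (0 : Fin 2)).continuous continuous_const
    · ext x; constructor
      · rintro ⟨h1, h2⟩; exact ⟨h2, h1⟩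
      · rintro ⟨h1, h2⟩; exact ⟨h2, h1⟩
  obtain ⟨R, hR, x₀, -, hb, hs⟩ := H TSet hne hsub hneq hclosed
  exact key ⟨R, hR, x₀, hb, hs⟩
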